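/- Let g : [0,∞) → ℝ be nonnegative and differentiable with ġ(t) ≤ -2c(1+t)^{-b} g(t) + 2(1+t)^{-m} g(t)^{1+p/2} + 2(1+t)^{-q} g(t)^{1/2}. With the choices b = 1, q = 3/2, m = 1, c = 4, p ≥ 1, and μ(t) = 4(1+t): if g(0) < 1/4 then g(t) ≤ 1/(4(1+t)) for all t ≥ 0, and hence g(t) → 0. -/

import Mathlib

open Set Filter

/-- Example 1: with `b = 1`, `q = 3/2`, `m = 1`, `c = 4`, `p ≥ 1` and `μ(t) = 4(1+t)`,
if `g(0) < 1/4` then `g(t) ≤ 1/(4(1+t))` for all `t ≥ 0` and `g(t) → 0`. -/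
theorem stmt11
    (p : ℝ) (hp : 1 ≤ p)
    (g g' : ℝ → ℝ)
    (hgnonneg : ∀ t ∈ Ici (0:ℝ), 0 ≤ g t)
    (hg : ∀ t ∈ Ici (0:ℝ), HasDerivAt g (g' t) t)
    (hineq : ∀ t ∈ Ici (0:ℝ), g' t ≤
      -2 * 4 / (1 + t) * g t + 2 / (1 + t) * g t ^ (1 + p / 2)
        + 2 / (1 + t) ^ ((3:ℝ)/2) * g t ^ ((1:ℝ)/2))
    (hinit : g 0 < 1 / 4) :
    (∀ t ∈ Ici (0:ℝ), g t ≤ 1 / (4 * (1 + t))) ∧ Tendsto g atTop (nhds 0) := by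
  have hBd : ∀ x : ℝ, (0:ℝ) ≤ x →
      HasDerivAt (fun t => 1/(4*(1+t))) (-1/(4*(1+x)^2)) x := by
    intro x hx
    have hne : (1:ℝ) + x ≠ 0 := by linarith
    have h : HasDerivAt (fun t : ℝ => 4*(1+t)) 4 x := by
      simpa using ((hasDerivAt_id x).const_add (1:ℝ)).const_mul (4:ℝ)
    have h2 := h.inv (by positivity)
    simp only [one_div]
    convert h2 using 1
    · rfl
    · rfl
    · rfl
    field_simp
  have key : ∀ t ∈ Ici (0:ℝ), g t ≤ 1 / (4 * (1 + t)) := by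
    intro T hT
    have hT0 : (0:ℝ) ≤ T := hT
    have main := image_le_of_deriv_right_lt_deriv_boundary'
      (f := g) (f' := g') (a := 0) (b := T)
      (B := fun t => 1/(4*(1+t))) (B' := fun x => -1/(4*(1+x)^2))
      (fun x hxI => ((hg x hxI.1).continuousAt).continuousWithinAt)
      (fun x hx => (hg x hx.1).hasDerivWithinAt)
      (by norm_num; linarith)
      (fun x hxI => ((hBd x hxI.1).continuousAt).continuousWithinAt)
      (fun x hx => (hBd x hx.1).hasDerivWithinAt)
      ?_ (right_mem_Icc.2 hT0)
    · exact main
    · intro x hx heq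
      have hx0 : (0:ℝ) ≤ x := hx.1
      have hs : (1:ℝ) ≤ 1 + x := by linarith
      have hs0 : (0:ℝ) < 1 + x := by linarith
      set A := (1+x) ^ ((1:ℝ)/2) with hA
      have hA0 : 0 < A := Real.rpow_pos_of_pos hs0 _
      have hA2 : A^2 = 1 + x := by
        rw [hA, ← Real.rpow_natCast ((1+x) ^ ((1:ℝ)/2)) 2, ← Real.rpow_mul hs0.le]
        norm_num
      have hA1 : 1 ≤ A := by nlinarith
      have hA3 : (1+x) ^ ((3:ℝ)/2) = A^3 := by
        rw [hA, ← Real.rpow_natCast ((1+x) ^ ((1:ℝ)/2)) 3, ← Real.rpow_mul hs0.le]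
        norm_num
      have hgx' : g x = 1/(4*(1+x)) := heq
      have hgxA : g x = 1/(4*A^2) := by rw [hgx', hA2]
      have hgpos : 0 < g x := by rw [hgxA]; positivity
      have hgle1 : g x ≤ 1 := by
        rw [hgx', div_le_one (by linarith)]; linarith
      have h12 : g x ^ ((1:ℝ)/2) = 1/(2*A) := by
        rw [← Real.sqrt_eq_rpow, show g x = (1/(2*A))^2 by rw [hgxA]; field_simp; ring]
        exact Real.sqrt_sq (by positivity)
      have h32 : g x ^ ((3:ℝ)/2) = 1/(8*A^3) := by
        rw [show ((3:ℝ)/2) = (1:ℝ)/2 * 3 by ring, Real.rpow_mul hgpos.le, h12,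
          show (3:ℝ) = ((3:ℕ):ℝ) by norm_num, Real.rpow_natCast]
        field_simp; ring
      have h1 : g x ^ (1 + p/2) ≤ g x ^ ((3:ℝ)/2) :=
        Real.rpow_le_rpow_of_exponent_ge hgpos hgle1 (by linarith)
      have hE := hineq x hx0
      rw [hA3, h12, show (1:ℝ) + x = A^2 from hA2.symm] at hE
      have h2' : 2/(A^2) * g x ^ (1 + p/2) ≤ 2/(A^2) * (1/(8*A^3)) := by
        apply mul_le_mul_of_nonneg_left (h1.trans_eq h32) (by positivity)
      have h1' : -2*4/(A^2) * g x = -2*4/(A^2) * (1/(4*A^2)) := by rw [hgxA]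
      have step : g' x ≤ -2*4/(A^2)*(1/(4*A^2)) + 2/(A^2)*(1/(8*A^3)) + 2/A^3*(1/(2*A)) := by
        linarith
      have e1 : -2*4/(A^2)*(1/(4*A^2)) + 2/(A^2)*(1/(8*A^3)) + 2/A^3*(1/(2*A))
          = 1/(4*A^5) - 1/A^4 := by field_simp; ring
      have e2 : -1/(4*(A^2)^2) - (1/(4*A^5) - 1/A^4) = (3*A-1)/(4*A^5) := by
        field_simp; ring
      have pos : 0 < (3*A-1)/(4*A^5) := div_pos (by linarith) (by positivity)
      show g' x < -1/(4*(1+x)^2)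
      rw [show (1:ℝ) + x = A^2 from hA2.symm]
      linarith
  refine ⟨key, ?_⟩
  have hlim : Tendsto (fun t : ℝ => 1/(4*(1+t))) atTop (nhds 0) := by
    have h1 : Tendsto (fun t : ℝ => 4*(1+t)) atTop atTop := by
      apply Tendsto.const_mul_atTop (by norm_num : (0:ℝ) < 4)
      exact tendsto_atTop_add_const_left _ 1 tendsto_id
    have h2 : Tendsto (fun t : ℝ => (4*(1+t))⁻¹) atTop (nhds 0) := h1.inv_tendsto_atTop
    simpa [one_div] using h2
  apply squeeze_zero' (f := g)
  · filter_upwards [eventually_ge_atTop (0:ℝ)] with t ht using hgnonneg t ht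
  · filter_upwards [eventually_ge_atTop (0:ℝ)] with t ht using key t ht
  · exact hlim
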